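/- arXiv:2503.15045 — 3 statements merged into one kernel-verified Lean document; each statement's English description precedes it below -/
import Mathlib

section
/- Let f : ℝ^p × ℝ^q → ℝ be twice continuously differentiable, let S ⊆ ℝ^q be a convex set containing η*, and assume the semi-orthogonality condition ∇_η∇_θ f(θ*,η) = 0 for all η ∈ S, where (θ*,η*) satisfies ∇_θ f(θ*,η*) = 0. If in addition θ ↦ f(θ,η) is concave for each fixed η ∈ S, then θ* maximizes θ ↦ f(θ,η) for every η ∈ S; that is, the partial maximizer θ_η = argmax_θ f(θ,η) equals θ* for all η ∈ S. -/
open InnerProductSpace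

/-- Lemma `Lsemiorto` (second claim): under semi-orthogonality and concavity of
`θ ↦ f(θ,η)`, the point `θ*` maximizes `θ ↦ f(θ,η)` for every `η ∈ S`, i.e. the
partial maximizer `θ_η` equals `θ*` on `S`. -/
theorem statement_6 {p q : ℕ}
    (f : EuclideanSpace ℝ (Fin p) × EuclideanSpace ℝ (Fin q) → ℝ)
    (hf : ContDiff ℝ 2 f)
    (S : Set (EuclideanSpace ℝ (Fin q))) (hS : Convex ℝ S)
    (θs : EuclideanSpace ℝ (Fin p)) (ηs : EuclideanSpace ℝ (Fin q)) (hηs : ηs ∈ S)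
    (hcrit : gradient (fun θ => f (θ, ηs)) θs = 0)
    (horth : ∀ η ∈ S, fderiv ℝ (fun η' => gradient (fun θ => f (θ, η')) θs) η = 0)
    (hconc : ∀ η ∈ S, ConcaveOn ℝ Set.univ (fun θ => f (θ, η))) :
    ∀ η ∈ S, ∀ θ, f (θ, η) ≤ f (θs, η) := by
  classical
  have hfd : Differentiable ℝ f := hf.differentiable (by norm_num)
  -- differentiability of the gradient map
  have h4 : ∀ η' : EuclideanSpace ℝ (Fin q),
      gradient (fun θ => f (θ, η')) θs = (toDual ℝ (EuclideanSpace ℝ (Fin p))).symm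
      ((fderiv ℝ f (θs, η')).comp
        (ContinuousLinearMap.inl ℝ (EuclideanSpace ℝ (Fin p)) (EuclideanSpace ℝ (Fin q)))) := by
    intro η'
    have hcomp : fderiv ℝ (fun θ => f (θ, η')) θs =
        (fderiv ℝ f (θs, η')).comp
          (ContinuousLinearMap.inl ℝ (EuclideanSpace ℝ (Fin p)) (EuclideanSpace ℝ (Fin q))) := by
      have h := ((hfd (θs, η')).hasFDerivAt.comp θs (show HasFDerivAt (fun e : EuclideanSpace ℝ (Fin p) => (e, η')) (ContinuousLinearMap.inl ℝ (EuclideanSpace ℝ (Fin p)) (EuclideanSpace ℝ (Fin q))) θs from hasFDerivAt_prodMk_left θs η')).fderiv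
      exact h
    show (toDual ℝ (EuclideanSpace ℝ (Fin p))).symm (fderiv ℝ (fun θ => f (θ, η')) θs) = _
    rw [hcomp]
  have hgdiff : Differentiable ℝ
      (fun η' : EuclideanSpace ℝ (Fin q) => gradient (fun θ => f (θ, η')) θs) := by
    have h1 : ContDiff ℝ 1 (fderiv ℝ f) := hf.fderiv_right (by norm_num)
    have h2 : Differentiable ℝ (fun η' : EuclideanSpace ℝ (Fin q) => fderiv ℝ f (θs, η')) :=
      (h1.differentiable one_ne_zero).comp ((differentiable_const θs).prodMk differentiable_id)
    have h3 : Differentiable ℝ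
        (fun η' : EuclideanSpace ℝ (Fin q) => (fderiv ℝ f (θs, η')).comp
          (ContinuousLinearMap.inl ℝ (EuclideanSpace ℝ (Fin p)) (EuclideanSpace ℝ (Fin q)))) :=
      h2.clm_comp (differentiable_const _)
    have h5 : Differentiable ℝ
        (fun η' : EuclideanSpace ℝ (Fin q) => (toDual ℝ (EuclideanSpace ℝ (Fin p))).symm
          ((fderiv ℝ f (θs, η')).comp
            (ContinuousLinearMap.inl ℝ (EuclideanSpace ℝ (Fin p)) (EuclideanSpace ℝ (Fin q))))) :=
      (toDual ℝ (EuclideanSpace ℝ (Fin p))).symm.toContinuousLinearEquiv.differentiable.comp h3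
    intro x
    exact (h5 x).congr_of_eventuallyEq (Filter.Eventually.of_forall fun y => h4 y)
  -- gradient vanishes on S
  have hgrad0 : ∀ η ∈ S, gradient (fun θ => f (θ, η)) θs = 0 := by
    intro η hη
    have hb := hS.norm_image_sub_le_of_norm_fderiv_le
      (fun x _ => (hgdiff x)) (C := 0)
      (fun x hx => by rw [horth x hx]; simp) hηs hη
    rw [zero_mul] at hb
    have heq : gradient (fun θ => f (θ, η)) θs = gradient (fun θ => f (θ, ηs)) θs :=
      sub_eq_zero.mp (norm_le_zero_iff.mp hb)
    rw [heq, hcrit]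
  -- concavity + zero gradient ⇒ max
  intro η hη θ
  have hdiff : DifferentiableAt ℝ (fun θ => f (θ, η)) θs := by
    have h := (hfd (θs, η)).comp (x := θs)
      (show DifferentiableAt ℝ (fun e : EuclideanSpace ℝ (Fin p) => (e, η)) θs from (differentiable_id.prodMk (differentiable_const η)) θs)
    exact h
  have h0 : fderiv ℝ (fun θ => f (θ, η)) θs = 0 :=
    (toDual ℝ (EuclideanSpace ℝ (Fin p))).symm.map_eq_zero_iff.mp (hgrad0 η hη)
  have hfder : HasFDerivAt (fun θ => f (θ, η))
      (0 : EuclideanSpace ℝ (Fin p) →L[ℝ] ℝ) θs := h0 ▸ hdiff.hasFDerivAt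
  have hl : HasDerivAt (fun t : ℝ => θs + t • (θ - θs)) (θ - θs) 0 := by
    simpa using ((hasDerivAt_id (0 : ℝ)).smul_const (θ - θs)).const_add θs
  have h0v : θs + (0:ℝ) • (θ - θs) = θs := by module
  have h1v : θs + (1:ℝ) • (θ - θs) = θ := by module
  have hline : HasDerivAt (fun t : ℝ => f (θs + t • (θ - θs), η)) 0 0 := by
    have h := hfder.comp_hasDerivAt_of_eq 0 hl h0v.symm
    exact h
  have hcc : ConvexOn ℝ Set.univ (fun t : ℝ => -f (θs + t • (θ - θs), η)) := by
    have h := ((hconc η hη).neg).comp_affineMap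
      (AffineMap.lineMap θs θ : ℝ →ᵃ[ℝ] EuclideanSpace ℝ (Fin p))
    simp only [Set.preimage_univ] at h
    have heq2 : (fun t : ℝ => -f (θs + t • (θ - θs), η)) =
        ((-fun θ => f (θ, η)) ∘ (AffineMap.lineMap θs θ : ℝ →ᵃ[ℝ] EuclideanSpace ℝ (Fin p))) := by
      funext t
      have : (AffineMap.lineMap θs θ : ℝ →ᵃ[ℝ] EuclideanSpace ℝ (Fin p)) t
          = θs + t • (θ - θs) := by
        simp [AffineMap.lineMap_apply, vsub_eq_sub, vadd_eq_add]
        module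
      simp [Function.comp, this]
    rw [heq2]
    exact h
  have hslope := hcc.le_slope_of_hasDerivAt (Set.mem_univ (0:ℝ)) (Set.mem_univ 1)
    zero_lt_one (by have h := hline.neg; rw [neg_zero] at h; exact h)
  rw [slope_def_field, h1v, h0v] at hslope
  have h2 : 0 ≤ (-f (θ, η) - -f (θs, η)) / (1 - 0) := hslope
  rw [sub_zero, div_one] at h2
  linarith
end

section
/- Let 𝔉 be a symmetric positive definite (p+q)×(p+q) matrix with block decomposition into 𝔉_θθ (p×p), 𝔉_θη (p×q), 𝔉_ηθ = 𝔉_θηᵀ, and 𝔉_ηη (q×q), and suppose the separability condition ‖𝔉_θθ^{−1/2} 𝔉_θη 𝔉_ηη⁻¹ 𝔉_ηθ 𝔉_θθ^{−1/2}‖ ≤ ρ² holds for some 0 ≤ ρ < 1 (operator norm). Then with 𝔉₀ = blockdiag(𝔉_θθ, 𝔉_ηη) one has the Loewner sandwich (1 − ρ)𝔉₀ ≤ 𝔉 ≤ (1 + ρ)𝔉₀. -/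
open scoped Matrix Matrix.Norms.L2Operator RealInnerProductSpace

/-- The old Mathlib `Matrix.PosSemidef.sqrt` (removed since), spelled out with its original
definition. -/
noncomputable def Matrix.PosSemidef.sqrtOld {n 𝕜 : Type*} [Fintype n] [DecidableEq n] [RCLike 𝕜]
    [PartialOrder 𝕜] [StarOrderedRing 𝕜]
    {A : Matrix n n 𝕜} (hA : A.PosSemidef) : Matrix n n 𝕜 :=
  hA.1.eigenvectorUnitary.1 * Matrix.diagonal ((↑) ∘ (√·) ∘ hA.1.eigenvalues) *
    (star hA.1.eigenvectorUnitary : Matrix n n 𝕜)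

lemma sqrtOld_mul_self' {n : Type*} [Fintype n] [DecidableEq n] {A : Matrix n n ℝ}
    (hA : A.PosSemidef) : hA.sqrtOld * hA.sqrtOld = A := by
  have hU : (star hA.1.eigenvectorUnitary : Matrix n n ℝ) * hA.1.eigenvectorUnitary = 1 :=
    Unitary.coe_star_mul_self _
  have hspec := hA.1.spectral_theorem
  rw [Unitary.conjStarAlgAut_apply] at hspec
  unfold Matrix.PosSemidef.sqrtOld
  conv_rhs => rw [hspec]
  calc _ = (hA.1.eigenvectorUnitary : Matrix n n ℝ) *
        (Matrix.diagonal ((RCLike.ofReal : ℝ → ℝ) ∘ (√·) ∘ hA.1.eigenvalues) *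
          ((star hA.1.eigenvectorUnitary : Matrix n n ℝ) *
            (hA.1.eigenvectorUnitary : Matrix n n ℝ)) *
          Matrix.diagonal ((RCLike.ofReal : ℝ → ℝ) ∘ (√·) ∘ hA.1.eigenvalues)) *
        (star hA.1.eigenvectorUnitary : Matrix n n ℝ) := by simp only [Matrix.mul_assoc]
  _ = _ := by
    rw [hU, Matrix.mul_one, Matrix.diagonal_mul_diagonal]
    congr 3
    funext i
    simp [Real.mul_self_sqrt (hA.eigenvalues_nonneg i)]

lemma sqrtOld_isHermitian' {n : Type*} [Fintype n] [DecidableEq n] {A : Matrix n n ℝ}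
    (hA : A.PosSemidef) : hA.sqrtOld.IsHermitian := by
  unfold Matrix.PosSemidef.sqrtOld Matrix.IsHermitian
  simp [Matrix.star_eq_conjTranspose, Matrix.conjTranspose_mul, Matrix.mul_assoc]


/-- Lemma `Lidentsemi` (first claim): under the separability condition
`‖𝔉_θθ^{−1/2} 𝔉_θη 𝔉_ηη⁻¹ 𝔉_ηθ 𝔉_θθ^{−1/2}‖ ≤ ρ² < 1`, the Loewner sandwich
`(1 − ρ)𝔉₀ ≤ 𝔉 ≤ (1 + ρ)𝔉₀` holds with `𝔉₀ = blockdiag(𝔉_θθ, 𝔉_ηη)`. -/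
theorem statement_18 {p q : ℕ}
    (Fθθ : Matrix (Fin p) (Fin p) ℝ) (Fθη : Matrix (Fin p) (Fin q) ℝ)
    (Fηη : Matrix (Fin q) (Fin q) ℝ)
    (hFpos : (Matrix.fromBlocks Fθθ Fθη Fθηᵀ Fηη).PosDef)
    (hθθ : Fθθ.PosDef)
    (ρ : ℝ) (hρ0 : 0 ≤ ρ) (hρ1 : ρ < 1)
    (hsep : ‖(hθθ.posSemidef.sqrtOld)⁻¹ * Fθη * Fηη⁻¹ * Fθηᵀ * (hθθ.posSemidef.sqrtOld)⁻¹‖ ≤ ρ ^ 2) :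
    (Matrix.fromBlocks Fθθ Fθη Fθηᵀ Fηη
        - (1 - ρ) • Matrix.fromBlocks Fθθ 0 0 Fηη).PosSemidef ∧
      ((1 + ρ) • Matrix.fromBlocks Fθθ 0 0 Fηη
        - Matrix.fromBlocks Fθθ Fθη Fθηᵀ Fηη).PosSemidef := by
  have hherm := hFpos.1
  rw [Matrix.isHermitian_fromBlocks_iff] at hherm
  -- Fηη is positive definite
  have hηη : Fηη.PosDef := by
    refine Matrix.PosDef.of_dotProduct_mulVec_pos hherm.2.2.2 fun v hv => ?_
    have h := hFpos.dotProduct_mulVec_pos (x := Sum.elim 0 v) (by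
      intro h0
      apply hv
      funext i
      exact congrFun h0 (Sum.inr i))
    simpa [Matrix.fromBlocks_mulVec, Sum.elim_comp_inl, Sum.elim_comp_inr,
      sumElim_dotProduct_sumElim] using h
  -- square roots
  set S := hθθ.posSemidef.sqrtOld with hSdef
  set T := hηη.posSemidef.sqrtOld with hTdef
  have hS : S.IsHermitian := sqrtOld_isHermitian' hθθ.posSemidef
  have hT : T.IsHermitian := sqrtOld_isHermitian' hηη.posSemidef
  have hSA : S * S = Fθθ := sqrtOld_mul_self' hθθ.posSemidef
  have hTC : T * T = Fηη := sqrtOld_mul_self' hηη.posSemidef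
  have hSu : IsUnit S.det := by
    have h2 : S.det * S.det = Fθθ.det := by rw [← Matrix.det_mul, hSA]
    have hd := hθθ.det_pos
    refine isUnit_iff_ne_zero.mpr fun h0 => ?_
    rw [h0, mul_zero] at h2
    exact hd.ne' h2.symm
  have hTu : IsUnit T.det := by
    have h2 : T.det * T.det = Fηη.det := by rw [← Matrix.det_mul, hTC]
    have hd := hηη.det_pos
    refine isUnit_iff_ne_zero.mpr fun h0 => ?_
    rw [h0, mul_zero] at h2
    exact hd.ne' h2.symm
  have hSS : S * S⁻¹ = 1 := Matrix.mul_nonsing_inv S hSu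
  have hSS' : S⁻¹ * S = 1 := Matrix.nonsing_inv_mul S hSu
  have hTT : T * T⁻¹ = 1 := Matrix.mul_nonsing_inv T hTu
  have hTT' : T⁻¹ * T = 1 := Matrix.nonsing_inv_mul T hTu
  set M := S⁻¹ * Fθη * T⁻¹ with hM
  have hB : Fθη = S * M * T := by
    rw [hM]
    symm
    calc S * (S⁻¹ * Fθη * T⁻¹) * T = (S * S⁻¹) * Fθη * (T⁻¹ * T) := by
          simp only [Matrix.mul_assoc]
    _ = Fθη := by rw [hSS, hTT', Matrix.one_mul, Matrix.mul_one]
  -- norm bound on M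
  have hMn : ‖M‖ ≤ ρ := by
    have hMH : Mᴴ = T⁻¹ * Fθηᵀ * S⁻¹ := by
      rw [hM, Matrix.conjTranspose_mul, Matrix.conjTranspose_mul, hS.inv.eq, hT.inv.eq]
      rw [Matrix.conjTranspose_eq_transpose_of_trivial, Matrix.mul_assoc]
    have hMMH : M * Mᴴ = S⁻¹ * Fθη * Fηη⁻¹ * Fθηᵀ * S⁻¹ := by
      rw [hMH, hM, ← hTC, Matrix.mul_inv_rev]
      simp only [Matrix.mul_assoc]
    have h1 : ‖M‖ * ‖M‖ ≤ ρ ^ 2 := by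
      have h := Matrix.l2_opNorm_conjTranspose_mul_self Mᴴ
      rw [Matrix.conjTranspose_conjTranspose, Matrix.l2_opNorm_conjTranspose] at h
      rw [← h, hMMH]
      exact hsep
    nlinarith [norm_nonneg M]
  -- key scalar inequality
  have key : ∀ (u : Fin p → ℝ) (v : Fin q → ℝ),
      2 * |u ⬝ᵥ (Fθη *ᵥ v)| ≤ ρ * (u ⬝ᵥ (Fθθ *ᵥ u) + v ⬝ᵥ (Fηη *ᵥ v)) := by
    intro u v
    have hSt : Sᵀ = S := by rw [← Matrix.conjTranspose_eq_transpose_of_trivial, hS.eq]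
    have hTt : Tᵀ = T := by rw [← Matrix.conjTranspose_eq_transpose_of_trivial, hT.eq]
    set a : EuclideanSpace ℝ (Fin p) := (WithLp.equiv 2 _).symm (S *ᵥ u) with ha
    set b : EuclideanSpace ℝ (Fin q) := (WithLp.equiv 2 _).symm (T *ᵥ v) with hb
    set c : EuclideanSpace ℝ (Fin p) := (WithLp.equiv 2 _).symm (M *ᵥ (T *ᵥ v)) with hc
    have hdot : u ⬝ᵥ (Fθη *ᵥ v) = ⟪a, c⟫ := by
      rw [EuclideanSpace.inner_eq_star_dotProduct]
      simp only [ha, hc, Equiv.apply_symm_apply, star_trivial]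
      rw [hB, ← Matrix.mulVec_mulVec, ← Matrix.mulVec_mulVec, Matrix.dotProduct_mulVec,
        ← Matrix.mulVec_transpose, hSt]
      exact dotProduct_comm _ _
    have hcn : ‖c‖ ≤ ρ * ‖b‖ := by
      have h := Matrix.l2_opNorm_mulVec M b
      calc ‖c‖ ≤ ‖M‖ * ‖b‖ := h
      _ ≤ ρ * ‖b‖ := mul_le_mul_of_nonneg_right hMn (norm_nonneg b)
    have hA : u ⬝ᵥ (Fθθ *ᵥ u) = ‖a‖ ^ 2 := by
      rw [← real_inner_self_eq_norm_sq, EuclideanSpace.inner_eq_star_dotProduct]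
      simp only [ha, Equiv.apply_symm_apply, star_trivial]
      rw [← hSA, ← Matrix.mulVec_mulVec, Matrix.dotProduct_mulVec,
        ← Matrix.mulVec_transpose, hSt]
      rfl
    have hC : v ⬝ᵥ (Fηη *ᵥ v) = ‖b‖ ^ 2 := by
      rw [← real_inner_self_eq_norm_sq, EuclideanSpace.inner_eq_star_dotProduct]
      simp only [hb, Equiv.apply_symm_apply, star_trivial]
      rw [← hTC, ← Matrix.mulVec_mulVec, Matrix.dotProduct_mulVec,
        ← Matrix.mulVec_transpose, hTt]
      rfl
    have habs : |u ⬝ᵥ (Fθη *ᵥ v)| ≤ ρ * (‖a‖ * ‖b‖) := by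
      rw [hdot]
      calc |⟪a, c⟫| ≤ ‖a‖ * ‖c‖ := abs_real_inner_le_norm a c
      _ ≤ ‖a‖ * (ρ * ‖b‖) := mul_le_mul_of_nonneg_left hcn (norm_nonneg a)
      _ = ρ * (‖a‖ * ‖b‖) := by ring
    rw [hA, hC]
    nlinarith [abs_nonneg (u ⬝ᵥ (Fθη *ᵥ v)), sq_nonneg (‖a‖ - ‖b‖)]
  -- quadratic form identities
  have quad : ∀ x : Fin p ⊕ Fin q → ℝ,
      x ⬝ᵥ ((Matrix.fromBlocks Fθθ Fθη Fθηᵀ Fηη) *ᵥ x)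
        = (x ∘ Sum.inl) ⬝ᵥ (Fθθ *ᵥ (x ∘ Sum.inl))
          + 2 * ((x ∘ Sum.inl) ⬝ᵥ (Fθη *ᵥ (x ∘ Sum.inr)))
          + (x ∘ Sum.inr) ⬝ᵥ (Fηη *ᵥ (x ∘ Sum.inr)) := by
    intro x
    have hx : x = Sum.elim (x ∘ Sum.inl) (x ∘ Sum.inr) := by
      funext i; cases i <;> rfl
    set u := x ∘ Sum.inl
    set v := x ∘ Sum.inr
    have hvBu : v ⬝ᵥ (Fθηᵀ *ᵥ u) = u ⬝ᵥ (Fθη *ᵥ v) := by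
      rw [Matrix.mulVec_transpose, Matrix.dotProduct_mulVec, dotProduct_comm]
    rw [hx, Matrix.fromBlocks_mulVec, sumElim_dotProduct_sumElim]
    simp only [Sum.elim_comp_inl, Sum.elim_comp_inr, dotProduct_add]
    rw [hvBu]
    ring
  have quad0 : ∀ x : Fin p ⊕ Fin q → ℝ,
      x ⬝ᵥ ((Matrix.fromBlocks Fθθ 0 0 Fηη) *ᵥ x)
        = (x ∘ Sum.inl) ⬝ᵥ (Fθθ *ᵥ (x ∘ Sum.inl))
          + (x ∘ Sum.inr) ⬝ᵥ (Fηη *ᵥ (x ∘ Sum.inr)) := by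
    intro x
    have hx : x = Sum.elim (x ∘ Sum.inl) (x ∘ Sum.inr) := by
      funext i; cases i <;> rfl
    rw [hx, Matrix.fromBlocks_mulVec, sumElim_dotProduct_sumElim]
    simp [Sum.elim_comp_inl, Sum.elim_comp_inr, dotProduct_add]
  -- Hermitian facts
  have hF0herm : (Matrix.fromBlocks Fθθ 0 0 Fηη).IsHermitian := by
    rw [Matrix.isHermitian_fromBlocks_iff]
    exact ⟨hθθ.1, by simp, by simp, hηη.1⟩
  have hsmul : ∀ (r : ℝ), (r • Matrix.fromBlocks Fθθ 0 0 Fηη).IsHermitian := fun r => by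
    have h0 := hF0herm
    unfold Matrix.IsHermitian at h0 ⊢
    rw [Matrix.conjTranspose_smul, star_trivial, h0]
  constructor
  · refine Matrix.PosSemidef.of_dotProduct_mulVec_nonneg (hFpos.1.sub (hsmul _)) fun x => ?_
    rw [star_trivial, Matrix.sub_mulVec, Matrix.smul_mulVec, dotProduct_sub,
      dotProduct_smul, quad, quad0]
    have hk := key (x ∘ Sum.inl) (x ∘ Sum.inr)
    simp only [smul_eq_mul]
    linarith [neg_abs_le ((x ∘ Sum.inl) ⬝ᵥ (Fθη *ᵥ (x ∘ Sum.inr))),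
      le_abs_self ((x ∘ Sum.inl) ⬝ᵥ (Fθη *ᵥ (x ∘ Sum.inr)))]
  · refine Matrix.PosSemidef.of_dotProduct_mulVec_nonneg ((hsmul _).sub hFpos.1) fun x => ?_
    rw [star_trivial, Matrix.sub_mulVec, Matrix.smul_mulVec, dotProduct_sub,
      dotProduct_smul, quad, quad0]
    have hk := key (x ∘ Sum.inl) (x ∘ Sum.inr)
    simp only [smul_eq_mul]
    linarith [neg_abs_le ((x ∘ Sum.inl) ⬝ᵥ (Fθη *ᵥ (x ∘ Sum.inr))),
      le_abs_self ((x ∘ Sum.inl) ⬝ᵥ (Fθη *ᵥ (x ∘ Sum.inr)))]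
end

section
/- Let 𝔉 be a symmetric positive definite (p+q)×(p+q) matrix with block decomposition into 𝔉_θθ (p×p), 𝔉_θη (p×q), 𝔉_ηθ = 𝔉_θηᵀ, and 𝔉_ηη (q×q), and suppose the separability condition ‖𝔉_θθ^{−1/2} 𝔉_θη 𝔉_ηη⁻¹ 𝔉_ηθ 𝔉_θθ^{−1/2}‖ ≤ ρ² holds for some 0 ≤ ρ < 1 (operator norm). Then the Schur complements Φ_θθ = 𝔉_θθ − 𝔉_θη 𝔉_ηη⁻¹ 𝔉_ηθ and Φ_ηη = 𝔉_ηη − 𝔉_ηθ 𝔉_θθ⁻¹ 𝔉_θη satisfy (1 − ρ²)𝔉_θθ ≤ Φ_θθ ≤ 𝔉_θθ and (1 − ρ²)𝔉_ηη ≤ Φ_ηη ≤ 𝔉_ηη in the Loewner order. -/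
open scoped Matrix Matrix.Norms.L2Operator

section

open scoped ComplexOrder

/-- The square root of a positive semidefinite matrix, as `Matrix.PosSemidef.sqrt` was defined in
the older Mathlib (it has since been removed in favour of `CFC.sqrt`). -/
noncomputable def Matrix.PosSemidef.sqrt {n 𝕜 : Type*} [Fintype n] [DecidableEq n] [RCLike 𝕜]
    {A : Matrix n n 𝕜} (hA : A.PosSemidef) : Matrix n n 𝕜 :=
  hA.1.eigenvectorUnitary.1 * Matrix.diagonal ((↑) ∘ (Real.sqrt ∘ hA.1.eigenvalues)) *
    (star hA.1.eigenvectorUnitary : Matrix n n 𝕜)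

end

section

open scoped ComplexOrder

lemma Matrix.PosSemidef.sqrt_mul_self {n 𝕜 : Type*} [Fintype n] [DecidableEq n] [RCLike 𝕜]
    {A : Matrix n n 𝕜} (hA : A.PosSemidef) : hA.sqrt * hA.sqrt = A := by
  have hU : (star hA.1.eigenvectorUnitary : Matrix n n 𝕜) * hA.1.eigenvectorUnitary.1 = 1 :=
    Unitary.coe_star_mul_self _
  conv_rhs => rw [hA.1.spectral_theorem, Unitary.conjStarAlgAut_apply]
  unfold Matrix.PosSemidef.sqrt
  calc _ = hA.1.eigenvectorUnitary.1 * Matrix.diagonal ((↑) ∘ (Real.sqrt ∘ hA.1.eigenvalues)) *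
        ((star hA.1.eigenvectorUnitary : Matrix n n 𝕜) * hA.1.eigenvectorUnitary.1) *
        Matrix.diagonal ((↑) ∘ (Real.sqrt ∘ hA.1.eigenvalues)) *
        (star hA.1.eigenvectorUnitary : Matrix n n 𝕜) := by simp only [Matrix.mul_assoc]
    _ = _ := by
      rw [hU, Matrix.mul_one, Matrix.mul_assoc _ (Matrix.diagonal _) (Matrix.diagonal _),
        Matrix.diagonal_mul_diagonal]
      congr 3
      funext i
      simp only [Function.comp_apply]
      rw [← RCLike.ofReal_mul, Real.mul_self_sqrt (hA.eigenvalues_nonneg i)]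

lemma Matrix.PosSemidef.posSemidef_sqrt {n 𝕜 : Type*} [Fintype n] [DecidableEq n] [RCLike 𝕜]
    {A : Matrix n n 𝕜} (hA : A.PosSemidef) : hA.sqrt.PosSemidef := by
  have hD : (Matrix.diagonal ((↑) ∘ (Real.sqrt ∘ hA.1.eigenvalues)) : Matrix n n 𝕜).PosSemidef :=
    Matrix.PosSemidef.diagonal (fun i => by
      simp only [Pi.zero_apply, Function.comp_apply]
      exact_mod_cast Real.sqrt_nonneg _)
  have := hD.mul_mul_conjTranspose_same (hA.1.eigenvectorUnitary.1)
  unfold Matrix.PosSemidef.sqrt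
  rwa [Matrix.star_eq_conjTranspose]

end

noncomputable def euVec {n : ℕ} (y : Fin n → ℝ) : EuclideanSpace ℝ (Fin n) :=
  (WithLp.equiv 2 (Fin n → ℝ)).symm y

lemma real_conjTranspose_eq {m n : ℕ} (A : Matrix (Fin m) (Fin n) ℝ) : Aᴴ = Aᵀ := by
  ext i j; simp [Matrix.conjTranspose_apply]

lemma dot_eq_normsq {n : ℕ} (y : Fin n → ℝ) : y ⬝ᵥ y = ‖euVec y‖ ^ 2 := by
  rw [← real_inner_self_eq_norm_sq, PiLp.inner_apply]
  simp [dotProduct, euVec, sq]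

lemma dot_le_norm_mul {n : ℕ} (y z : Fin n → ℝ) : y ⬝ᵥ z ≤ ‖euVec y‖ * ‖euVec z‖ := by
  have := real_inner_le_norm (euVec y) (euVec z)
  simpa [PiLp.inner_apply, dotProduct, euVec, mul_comm] using this

lemma norm_mulVec_le {m n : ℕ} (A : Matrix (Fin m) (Fin n) ℝ) (x : Fin n → ℝ) :
    ‖euVec (A *ᵥ x)‖ ≤ ‖A‖ * ‖euVec x‖ := by simpa [euVec] using A.l2_opNorm_mulVec (euVec x)

lemma quad_le {n : ℕ} (M : Matrix (Fin n) (Fin n) ℝ) (y : Fin n → ℝ) :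
    y ⬝ᵥ M *ᵥ y ≤ ‖M‖ * (y ⬝ᵥ y) := by
  calc y ⬝ᵥ M *ᵥ y ≤ ‖euVec y‖ * ‖euVec (M *ᵥ y)‖ := dot_le_norm_mul _ _
    _ ≤ ‖euVec y‖ * (‖M‖ * ‖euVec y‖) :=
        mul_le_mul_of_nonneg_left (norm_mulVec_le M y) (norm_nonneg _)
    _ = ‖M‖ * ‖euVec y‖ ^ 2 := by ring
    _ = ‖M‖ * (y ⬝ᵥ y) := by rw [dot_eq_normsq]

lemma dot_self_nonneg {n : ℕ} (y : Fin n → ℝ) : 0 ≤ y ⬝ᵥ y := by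
  rw [dot_eq_normsq]; positivity

/-- Lemma `Lidentsemi` (second claim): under the separability condition
`‖𝔉_θθ^{−1/2} 𝔉_θη 𝔉_ηη⁻¹ 𝔉_ηθ 𝔉_θθ^{−1/2}‖ ≤ ρ² < 1`, the Schur complements satisfy
`(1 − ρ²)𝔉_θθ ≤ Φ_θθ ≤ 𝔉_θθ` and `(1 − ρ²)𝔉_ηη ≤ Φ_ηη ≤ 𝔉_ηη`. -/
theorem statement_19 {p q : ℕ}
    (Fθθ : Matrix (Fin p) (Fin p) ℝ) (Fθη : Matrix (Fin p) (Fin q) ℝ)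
    (Fηη : Matrix (Fin q) (Fin q) ℝ)
    (hFpos : (Matrix.fromBlocks Fθθ Fθη Fθηᵀ Fηη).PosDef)
    (hθθ : Fθθ.PosDef)
    (ρ : ℝ) (hρ0 : 0 ≤ ρ) (hρ1 : ρ < 1)
    (hsep : ‖(hθθ.posSemidef.sqrt)⁻¹ * Fθη * Fηη⁻¹ * Fθηᵀ * (hθθ.posSemidef.sqrt)⁻¹‖ ≤ ρ ^ 2) :
    ((Fθθ - Fθη * Fηη⁻¹ * Fθηᵀ) - (1 - ρ ^ 2) • Fθθ).PosSemidef ∧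
      (Fθθ - (Fθθ - Fθη * Fηη⁻¹ * Fθηᵀ)).PosSemidef ∧
      ((Fηη - Fθηᵀ * Fθθ⁻¹ * Fθη) - (1 - ρ ^ 2) • Fηη).PosSemidef ∧
      (Fηη - (Fηη - Fθηᵀ * Fθθ⁻¹ * Fθη)).PosSemidef := by
  classical
  set S := hθθ.posSemidef.sqrt with hSdef
  have hSps : S.PosSemidef := hθθ.posSemidef.posSemidef_sqrt
  have hSS : S * S = Fθθ := hθθ.posSemidef.sqrt_mul_self
  have hSsym : Sᵀ = S := by
    have := hSps.1; rwa [Matrix.IsHermitian, real_conjTranspose_eq] at this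
  have hSdet : IsUnit S.det := by
    rw [isUnit_iff_ne_zero]
    intro h
    have : Fθθ.det = 0 := by rw [← hSS, Matrix.det_mul, h, mul_zero]
    exact hθθ.det_pos.ne' this
  have hS1 : S * S⁻¹ = 1 := Matrix.mul_nonsing_inv _ hSdet
  have hS2 : S⁻¹ * S = 1 := Matrix.nonsing_inv_mul _ hSdet
  have hSinvsym : (S⁻¹)ᵀ = S⁻¹ := by rw [Matrix.transpose_nonsing_inv, hSsym]
  -- Fηη is positive definite
  have hηη : Fηη.PosDef := by
    refine Matrix.PosDef.of_dotProduct_mulVec_pos ?_ ?_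
    · have h := hFpos.1
      rw [Matrix.IsHermitian] at h
      ext i j
      have := congrFun (congrFun h (Sum.inr i)) (Sum.inr j)
      simpa [Matrix.conjTranspose_apply] using this
    · intro x hx
      have hv : (Sum.elim 0 x : Fin p ⊕ Fin q → ℝ) ≠ 0 := by
        intro h
        apply hx
        funext i
        exact congrFun h (Sum.inr i)
      have := hFpos.dotProduct_mulVec_pos hv
      simpa [Matrix.fromBlocks_mulVec, dotProduct, Fintype.sum_sum_type,
        Matrix.mulVec_zero] using this
  -- the separability matrix
  set M := S⁻¹ * Fθη * Fηη⁻¹ * Fθηᵀ * S⁻¹ with hMdef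
  set C := Fθη * Fηη⁻¹ * Fθηᵀ with hCdef
  have hCps : C.PosSemidef := by
    have := (hηη.inv.posSemidef).mul_mul_conjTranspose_same Fθη
    rwa [real_conjTranspose_eq] at this
  have hDps : (Fθηᵀ * Fθθ⁻¹ * Fθη).PosSemidef := by
    have := (hθθ.inv.posSemidef).conjTranspose_mul_mul_same Fθη
    rwa [real_conjTranspose_eq] at this
  have hMC : S * M * S = C := by
    rw [hMdef, hCdef]
    rw [show S⁻¹ * Fθη * Fηη⁻¹ * Fθηᵀ * S⁻¹ = S⁻¹ * (Fθη * Fηη⁻¹ * Fθηᵀ * S⁻¹) by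
      simp only [Matrix.mul_assoc]]
    rw [← Matrix.mul_assoc S S⁻¹, hS1, Matrix.one_mul, Matrix.mul_assoc, hS2, Matrix.mul_one]
  -- quadratic-form identities
  have hvS : ∀ v : Fin p → ℝ, v ᵥ* S = S *ᵥ v := by
    intro v
    calc v ᵥ* S = v ᵥ* Sᵀ := by rw [hSsym]
      _ = S *ᵥ v := Matrix.vecMul_transpose ..
  have hquadθ : ∀ x : Fin p → ℝ, x ⬝ᵥ Fθθ *ᵥ x = (S *ᵥ x) ⬝ᵥ (S *ᵥ x) := by
    intro x
    rw [← hSS, ← Matrix.mulVec_mulVec, Matrix.dotProduct_mulVec, hvS]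
  have hquadC : ∀ x : Fin p → ℝ, x ⬝ᵥ C *ᵥ x = (S *ᵥ x) ⬝ᵥ M *ᵥ (S *ᵥ x) := by
    intro x
    rw [← hMC, ← Matrix.mulVec_mulVec, ← Matrix.mulVec_mulVec, Matrix.dotProduct_mulVec, hvS]
  -- Claim 1
  have claim1 : ((Fθθ - C) - (1 - ρ ^ 2) • Fθθ).PosSemidef := by
    have key : (Fθθ - C) - (1 - ρ ^ 2) • Fθθ = ρ ^ 2 • Fθθ - C := by
      rw [sub_smul, one_smul]; abel
    rw [key]
    refine Matrix.PosSemidef.of_dotProduct_mulVec_nonneg ?_ ?_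
    · rw [Matrix.IsHermitian, real_conjTranspose_eq, Matrix.transpose_sub,
        Matrix.transpose_smul]
      have h1 : Fθθᵀ = Fθθ := by
        have := hθθ.1; rwa [Matrix.IsHermitian, real_conjTranspose_eq] at this
      have h2 : Cᵀ = C := by
        have := hCps.1; rwa [Matrix.IsHermitian, real_conjTranspose_eq] at this
      rw [h1, h2]
    · intro x
      have hs : star x = x := by simp
      rw [hs, Matrix.sub_mulVec, dotProduct_sub, Matrix.smul_mulVec,
        dotProduct_smul, hquadθ, hquadC, sub_nonneg, smul_eq_mul]
      calc (S *ᵥ x) ⬝ᵥ M *ᵥ (S *ᵥ x) ≤ ‖M‖ * ((S *ᵥ x) ⬝ᵥ (S *ᵥ x)) := quad_le _ _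
        _ ≤ ρ ^ 2 * ((S *ᵥ x) ⬝ᵥ (S *ᵥ x)) :=
            mul_le_mul_of_nonneg_right hsep (dot_self_nonneg _)
  -- Claim 2
  have claim2 : (Fθθ - (Fθθ - C)).PosSemidef := by
    rw [sub_sub_cancel]; exact hCps
  -- now the η side
  set T := hηη.posSemidef.sqrt with hTdef
  have hTps : T.PosSemidef := hηη.posSemidef.posSemidef_sqrt
  have hTT : T * T = Fηη := hηη.posSemidef.sqrt_mul_self
  have hTsym : Tᵀ = T := by
    have := hTps.1; rwa [Matrix.IsHermitian, real_conjTranspose_eq] at this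
  have hTdet : IsUnit T.det := by
    rw [isUnit_iff_ne_zero]
    intro h
    have : Fηη.det = 0 := by rw [← hTT, Matrix.det_mul, h, mul_zero]
    exact hηη.det_pos.ne' this
  have hT2 : T⁻¹ * T = 1 := Matrix.nonsing_inv_mul _ hTdet
  have hTinvsym : (T⁻¹)ᵀ = T⁻¹ := by rw [Matrix.transpose_nonsing_inv, hTsym]
  obtain ⟨A, hAdef⟩ : ∃ A, A = S⁻¹ * Fθη := ⟨_, rfl⟩
  obtain ⟨B, hBdef⟩ : ∃ B, B = A * T⁻¹ := ⟨_, rfl⟩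
  -- D = Aᵀ * A
  have hFθθinv : Fθθ⁻¹ = S⁻¹ * S⁻¹ := by rw [← hSS, Matrix.mul_inv_rev]
  have hDA : Fθηᵀ * Fθθ⁻¹ * Fθη = Aᵀ * A := by
    rw [hAdef, Matrix.transpose_mul, hSinvsym, hFθθinv]
    simp only [Matrix.mul_assoc]
  have hFηηinv : Fηη⁻¹ = T⁻¹ * T⁻¹ := by rw [← hTT, Matrix.mul_inv_rev]
  -- B * Bᵀ = M
  have hBBt : B * Bᵀ = M := by
    rw [hBdef, hAdef, hMdef, Matrix.transpose_mul, Matrix.transpose_mul, hTinvsym, hSinvsym,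
      hFηηinv]
    simp only [Matrix.mul_assoc]
  have hBnorm : ‖B‖ * ‖B‖ ≤ ρ ^ 2 := by
    have h1 : ‖Bᴴᴴ * Bᴴ‖ = ‖Bᴴ‖ * ‖Bᴴ‖ := Matrix.l2_opNorm_conjTranspose_mul_self Bᴴ
    rw [Matrix.conjTranspose_conjTranspose, Matrix.l2_opNorm_conjTranspose,
      real_conjTranspose_eq, hBBt] at h1
    rw [← h1]; exact hsep
  have hvT : ∀ v : Fin q → ℝ, v ᵥ* T = T *ᵥ v := by
    intro v
    calc v ᵥ* T = v ᵥ* Tᵀ := by rw [hTsym]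
      _ = T *ᵥ v := Matrix.vecMul_transpose ..
  have hquadη : ∀ x : Fin q → ℝ, x ⬝ᵥ Fηη *ᵥ x = (T *ᵥ x) ⬝ᵥ (T *ᵥ x) := by
    intro x
    rw [← hTT, ← Matrix.mulVec_mulVec, Matrix.dotProduct_mulVec, hvT]
  have hquadD : ∀ x : Fin q → ℝ, x ⬝ᵥ (Fθηᵀ * Fθθ⁻¹ * Fθη) *ᵥ x = (A *ᵥ x) ⬝ᵥ (A *ᵥ x) := by
    intro x
    rw [hDA, ← Matrix.mulVec_mulVec, Matrix.dotProduct_mulVec, Matrix.vecMul_transpose]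
  have hAB : ∀ x : Fin q → ℝ, A *ᵥ x = B *ᵥ (T *ᵥ x) := by
    intro x
    rw [Matrix.mulVec_mulVec, hBdef, Matrix.mul_assoc, hT2, Matrix.mul_one]
  -- Claim 3
  have claim3 : ((Fηη - Fθηᵀ * Fθθ⁻¹ * Fθη) - (1 - ρ ^ 2) • Fηη).PosSemidef := by
    have key : (Fηη - Fθηᵀ * Fθθ⁻¹ * Fθη) - (1 - ρ ^ 2) • Fηη
        = ρ ^ 2 • Fηη - Fθηᵀ * Fθθ⁻¹ * Fθη := by
      rw [sub_smul, one_smul]; abel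
    rw [key]
    refine Matrix.PosSemidef.of_dotProduct_mulVec_nonneg ?_ ?_
    · rw [Matrix.IsHermitian, real_conjTranspose_eq, Matrix.transpose_sub,
        Matrix.transpose_smul]
      have h1 : Fηηᵀ = Fηη := by
        have := hηη.1; rwa [Matrix.IsHermitian, real_conjTranspose_eq] at this
      have h2 : (Fθηᵀ * Fθθ⁻¹ * Fθη)ᵀ = Fθηᵀ * Fθθ⁻¹ * Fθη := by
        have := hDps.1; rwa [Matrix.IsHermitian, real_conjTranspose_eq] at this
      rw [h1, h2]
    · intro x
      have hs : star x = x := by simp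
      rw [hs, Matrix.sub_mulVec, dotProduct_sub, Matrix.smul_mulVec,
        dotProduct_smul, hquadη, hquadD, sub_nonneg, smul_eq_mul]
      have hb : ‖euVec (A *ᵥ x)‖ ≤ ‖B‖ * ‖euVec (T *ᵥ x)‖ := by
        rw [hAB]; exact norm_mulVec_le _ _
      calc (A *ᵥ x) ⬝ᵥ (A *ᵥ x) = ‖euVec (A *ᵥ x)‖ ^ 2 := dot_eq_normsq _
        _ ≤ (‖B‖ * ‖euVec (T *ᵥ x)‖) ^ 2 := by
            apply pow_le_pow_left₀ (norm_nonneg _) hb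
        _ = ‖B‖ * ‖B‖ * ‖euVec (T *ᵥ x)‖ ^ 2 := by ring
        _ ≤ ρ ^ 2 * ‖euVec (T *ᵥ x)‖ ^ 2 := by
            apply mul_le_mul_of_nonneg_right hBnorm (by positivity)
        _ = ρ ^ 2 * ((T *ᵥ x) ⬝ᵥ (T *ᵥ x)) := by rw [dot_eq_normsq]
  -- Claim 4
  have claim4 : (Fηη - (Fηη - Fθηᵀ * Fθθ⁻¹ * Fθη)).PosSemidef := by
    rw [sub_sub_cancel]; exact hDps
  exact ⟨claim1, claim2, claim3, claim4⟩
end
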